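/- Let L, M, N be pairwise non-proportional 2×2 Hermitian matrices that are linearly independent. For nonzero reals λ, μ, ν, the matrices M − λN, N − μL, and L − νM are linearly dependent over ℝ if and only if λμν = 1. -/
import Mathlib


/-- Algebraic core of Ceva's theorem for Möbius triangles: for linearly
independent Hermitian matrices `L, M, N` and nonzero reals `λ, μ, ν`,
the cevian matrices `M − λN`, `N − μL`, `L − νM` are linearly dependent
over `ℝ` iff `λμν = 1`. -/
theorem ceva_matrices (L M N : Matrix (Fin 2) (Fin 2) ℂ)
    (hL : L.IsHermitian) (hM : M.IsHermitian) (hN : N.IsHermitian)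
    (hind : LinearIndependent ℝ ![L, M, N])
    (lam mu nu : ℝ) (hlam : lam ≠ 0) (hmu : mu ≠ 0) (hnu : nu ≠ 0) :
    ¬ LinearIndependent ℝ ![M - lam • N, N - mu • L, L - nu • M] ↔
      lam * mu * nu = 1 := by
  rw [Fintype.linearIndependent_iff] at hind
  constructor
  · intro h
    rw [Fintype.linearIndependent_iff] at h
    push_neg at h
    obtain ⟨g, hsum, i, hi⟩ := h
    simp only [Fin.sum_univ_three, Matrix.cons_val_zero, Matrix.cons_val_one, Matrix.head_cons,
      Matrix.cons_val_two, Matrix.tail_cons] at hsum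
    have key := hind ![-(g 1 * mu) + g 2, g 0 - g 2 * nu, -(g 0 * lam) + g 1] ?_
    · have e0 := key 0
      have e1 := key 1
      have e2 := key 2
      simp only [Matrix.cons_val_zero, Matrix.cons_val_one, Matrix.head_cons,
        Matrix.cons_val_two, Matrix.tail_cons] at e0 e1 e2
      clear key hsum hind
      have hg1 : g 1 ≠ 0 := by
        intro h1
        rw [h1] at e0 e2
        have h2 : g 2 = 0 := by nlinarith
        have h0 : g 0 = 0 := by
          have : g 0 * lam = 0 := by linarith
          exact (mul_eq_zero.mp this).resolve_right hlam
        apply hi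
        fin_cases i <;> assumption
      have : g 1 * (lam * mu * nu) = g 1 * 1 := by
        linear_combination -(lam * nu) * e0 - lam * e1 - e2
      exact mul_left_cancel₀ hg1 this
    · simp only [Fin.sum_univ_three, Matrix.cons_val_zero, Matrix.cons_val_one, Matrix.head_cons,
        Matrix.cons_val_two, Matrix.tail_cons]
      rw [← hsum]; module
  · intro h hli
    rw [Fintype.linearIndependent_iff] at hli
    have := hli ![mu * nu, 1, mu] ?_ 1
    · simp at this
    · simp only [Fin.sum_univ_three, Matrix.cons_val_zero, Matrix.cons_val_one, Matrix.head_cons,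
        Matrix.cons_val_two, Matrix.tail_cons, one_smul]
      have hk : (mu * nu) • (lam • N) = N := by
        rw [smul_smul, show mu * nu * lam = (1:ℝ) by linear_combination h, one_smul]
      rw [smul_sub, smul_sub, hk]
      module
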